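/- Every separable linearly ordered topological space is first countable. -/

import Mathlib

open Set Filter Topology TopologicalSpace

lemma aux_right {X : Type*} [LinearOrder X] [TopologicalSpace X] [OrderTopology X]
    [TopologicalSpace.SeparableSpace X] (x : X) : (𝓝[≥] x).IsCountablyGenerated := by
  rcases exists_countable_dense X with ⟨D, hDc, hDd⟩
  by_cases hmax : ∃ y, x < y
  · by_cases hcov : ∃ y, x ⋖ y
    · obtain ⟨y, hy⟩ := hcov
      have hIco : Ico x y = {x} := by
        ext z
        simp only [mem_Ico, mem_singleton_iff]
        constructor
        · rintro ⟨h1, h2⟩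
          rcases eq_or_lt_of_le h1 with h | h
          · exact h.symm
          · exact absurd h2 (hy.2 h)
        · rintro rfl; exact ⟨le_rfl, hy.1⟩
      have : 𝓝[≥] x = pure x := by
        refine le_antisymm (le_pure_iff.2 ?_) (pure_le_nhdsWithin le_rfl)
        have := Ico_mem_nhdsGE_of_mem (α := X) ⟨le_rfl, hy.1⟩
        rwa [hIco] at this
      rw [this]; infer_instance
    · push_neg at hcov
      have := hDc.to_subtype
      refine HasBasis.isCountablyGenerated
        (ι := {d // d ∈ D}) (p := fun d => x < d.1) (s := fun d => Ico x d.1) ?_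
      constructor
      intro s
      rw [(nhdsGE_basis_of_exists_gt hmax).mem_iff]
      constructor
      · rintro ⟨b, hxb, hbs⟩
        have hne : (Ioo x b).Nonempty := by
          by_contra h
          rw [not_nonempty_iff_eq_empty] at h
          exact hcov b ⟨hxb, fun c hc1 hc2 => (eq_empty_iff_forall_notMem.1 h c) ⟨hc1, hc2⟩⟩
        obtain ⟨d, hdD, hd⟩ := hDd.exists_mem_open isOpen_Ioo hne
        exact ⟨⟨d, hdD⟩, hd.1, fun z hz => hbs ⟨hz.1, hz.2.trans hd.2⟩⟩
      · rintro ⟨⟨d, hdD⟩, hxd, hds⟩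
        exact ⟨d, hxd, hds⟩
  · push_neg at hmax
    have : 𝓝[≥] x = pure x := by
      refine le_antisymm (le_pure_iff.2 ?_) (pure_le_nhdsWithin le_rfl)
      have hIci : Ici x = {x} := by
        ext z
        simp only [mem_Ici, mem_singleton_iff]
        exact ⟨fun h => le_antisymm (hmax z) h, fun h => h ▸ le_rfl⟩
      rw [← hIci]
      exact self_mem_nhdsWithin
    rw [this]; infer_instance

theorem stmt3 {X : Type*} [LinearOrder X] [TopologicalSpace X] [OrderTopology X]
    [TopologicalSpace.SeparableSpace X] : FirstCountableTopology X := by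
  refine ⟨fun x => ?_⟩
  rw [← nhdsLE_sup_nhdsGE]
  have h1 : (𝓝[≥] x).IsCountablyGenerated := aux_right x
  have hsep : TopologicalSpace.SeparableSpace Xᵒᵈ := ‹TopologicalSpace.SeparableSpace X›
  have h2 : (𝓝[≤] x).IsCountablyGenerated := aux_right (X := Xᵒᵈ) (OrderDual.toDual x)
  infer_instance
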